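/- arXiv:2302.13113 — 2 statements merged into one kernel-verified Lean document; each statement's English description precedes it below -/
import Mathlib

section
/- In the setting of the push-up lemma (sibling weakly-complete subtrees T of height h₂ and S of height h₁, with h₂ > h₁ where h₁ is measured after the move and h₂ before, and R the rest of the tree G on n nodes with |V(T)| + |V(S)| ≤ n/(9k)), the quantity Δ₃ = Σ_{w ∈ V(R)} d_G(u,w) − Σ_{w ∈ V(R)} d_G(v,w), where u is the moved leaf's old position and v its new position, satisfies Δ₃ = (h₂ − h₁)·|V(R)| ≥ (h₂ − h₁)·(9k − 1)·(|V(T)| + |V(S)|) > 8k·|V(T)|. -/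
inductive KTree : Type where
  | node : ℕ → List KTree → KTree

namespace KTree

instance : Inhabited KTree := ⟨node 0 []⟩

def rootKey : KTree → ℕ
  | node x _ => x

def children : KTree → List KTree
  | node _ cs => cs

def keys : KTree → List ℕ
  | node x cs => x :: (cs.attach.map (fun c => c.1.keys)).flatten
decreasing_by
  have := List.sizeOf_lt_of_mem c.2
  simp only [KTree.node.sizeOf_spec]
  omega

def size (t : KTree) : ℕ := t.keys.length

def height : KTree → ℕ
  | node _ cs => (cs.attach.map (fun c => c.1.height + 1)).foldr max 0
decreasing_by
  have := List.sizeOf_lt_of_mem c.2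
  simp only [KTree.node.sizeOf_spec]
  omega

def countAt : KTree → ℕ → ℕ
  | node _ _, 0 => 1
  | node _ cs, d + 1 => ((cs.attach.map (fun c => c.1.countAt d)).foldr (· + ·) 0)

def countsAt : KTree → ℕ → List ℕ
  | node _ cs, 0 => [cs.length]
  | node _ cs, d + 1 => (cs.attach.map (fun c => c.1.countsAt d)).flatten

def edges : KTree → List (ℕ × ℕ)
  | node x cs => (cs.map fun c => (x, c.rootKey)) ++ (cs.attach.map (fun c => c.1.edges)).flatten
decreasing_by
  have := List.sizeOf_lt_of_mem c.2
  simp only [KTree.node.sizeOf_spec]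
  omega

def graph (t : KTree) : SimpleGraph ℕ :=
  SimpleGraph.fromRel (fun a b => (a, b) ∈ t.edges)

noncomputable def dist (t : KTree) (u v : ℕ) : ℕ := t.graph.dist u v

noncomputable def totalDist (t : KTree) (D : ℕ → ℕ → ℕ) : ℕ :=
  ∑ u ∈ t.keys.toFinset, ∑ v ∈ t.keys.toFinset, t.dist u v * D u v

noncomputable def totalDistUniform (t : KTree) : ℕ :=
  ∑ u ∈ t.keys.toFinset, ∑ v ∈ t.keys.toFinset, t.dist u v

def DegLE (k : ℕ) : KTree → Prop
  | node _ cs => cs.length ≤ k ∧ ∀ c ∈ cs, DegLE k c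

def Separated : KTree → Prop
  | node _ cs =>
      (cs.Pairwise fun a b =>
        (∀ u ∈ a.keys, ∀ v ∈ b.keys, u < v) ∨ (∀ u ∈ a.keys, ∀ v ∈ b.keys, v < u)) ∧
      ∀ c ∈ cs, Separated c

def IsKAST (k i j : ℕ) (t : KTree) : Prop :=
  t.DegLE k ∧ t.Separated ∧ t.keys.Nodup ∧ ∀ m, m ∈ t.keys ↔ m ∈ Finset.Icc i j

def WeaklyComplete (k : ℕ) (t : KTree) : Prop :=
  t.DegLE k ∧ ∀ d, d < t.height → t.countAt d = k ^ d

def subtreeAt : KTree → List ℕ → Option KTree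
  | t, [] => some t
  | node _ cs, i :: is =>
    match cs[i]? with
    | some c => subtreeAt c is
    | none => none

def replaceAt : KTree → List ℕ → KTree → KTree
  | _, [], r => r
  | node x cs, i :: is, r => node x (cs.set i (replaceAt (cs.getD i default) is r))

def attachLeaf : KTree → List ℕ → ℕ → KTree
  | node x cs, [], u => node x (cs ++ [node u []])
  | node x cs, i :: is, u => node x (cs.set i (attachLeaf (cs.getD i default) is u))

def IsSubtreeOf (s t : KTree) : Prop := ∃ pos, subtreeAt t pos = some s

def graphAvoiding (t : KTree) (c : ℕ) : SimpleGraph ℕ :=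
  SimpleGraph.fromRel (fun a b => (a, b) ∈ t.edges ∧ a ≠ c ∧ b ≠ c)

def IsCentroid (t : KTree) (c : ℕ) : Prop :=
  c ∈ t.keys ∧ ∀ w ∈ t.keys, w ≠ c →
    2 * {w' | w' ∈ t.keys ∧ (t.graphAvoiding c).Reachable w w'}.ncard ≤ t.size

def uniformDemand : ℕ → ℕ → ℕ := fun u v => if u = v then 0 else 1

def IsOptimal (k n : ℕ) (T : KTree) : Prop :=
  IsKAST k 1 n T ∧ ∀ T' : KTree, IsKAST k 1 n T' → totalDistUniform T ≤ totalDistUniform T'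

def truncate : ℕ → KTree → KTree
  | 0, node x _ => node x []
  | d + 1, node x cs => node x (cs.attach.map (fun c => truncate d c.1))

def LastLevelPartial (k : ℕ) (t : KTree) : Prop :=
  1 ≤ t.height ∧ 0 < t.countAt t.height ∧ t.countAt t.height < k * t.countAt (t.height - 1)

def Packed (k : ℕ) (t : KTree) : Prop :=
  ∀ i j : ℕ, i < j → 0 < (t.countsAt (t.height - 1)).getD j 0 →
    (t.countsAt (t.height - 1)).getD i 0 = k

def Reorder : KTree → KTree → Prop
  | node x cs, node y ds =>
      x = y ∧ ∃ e : Fin cs.length ≃ Fin ds.length,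
        ∀ i : Fin cs.length, Reorder cs[i] ds[e i]
termination_by t _ => sizeOf t
decreasing_by
  have h1 : cs[i] ∈ cs := List.getElem_mem _
  have := List.sizeOf_lt_of_mem h1
  simp only [KTree.node.sizeOf_spec]
  omega

def IsQuasiOptimal (k n : ℕ) (t : KTree) : Prop :=
  t.keys.Nodup ∧ (∀ m, m ∈ t.keys ↔ m ∈ Finset.Icc 1 n) ∧
  t.children.length = k + 1 ∧
  (∀ c ∈ t.children, WeaklyComplete k c) ∧
  (∀ d, 0 < d → d < t.height → t.countAt d = (k + 1) * k ^ (d - 1)) ∧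
  Packed k t

end KTree

namespace KTree

/-- Structural induction principle. -/
theorem ind {P : KTree → Prop} (h : ∀ x cs, (∀ c ∈ cs, P c) → P (node x cs)) : ∀ t, P t
  | node x cs => h x cs (fun c hc => ind h c)
decreasing_by
  have := List.sizeOf_lt_of_mem hc
  simp only [KTree.node.sizeOf_spec]
  omega

theorem keys_node (x : ℕ) (cs : List KTree) :
    keys (node x cs) = x :: (cs.map keys).flatten := by
  rw [keys, List.attach_map_val]

theorem edges_node (x : ℕ) (cs : List KTree) :
    edges (node x cs) = (cs.map fun c => (x, c.rootKey)) ++ (cs.map edges).flatten := by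
  rw [edges, List.attach_map_val]

theorem rootKey_mem_keys (t : KTree) : t.rootKey ∈ t.keys := by
  cases t with | node x cs => simp [keys_node, rootKey]

theorem keys_sublist_of_child {c : KTree} {x : ℕ} {cs : List KTree} (hc : c ∈ cs) :
    c.keys.Sublist (node x cs).keys := by
  rw [keys_node]
  exact (List.sublist_flatten_of_mem (List.mem_map_of_mem (f := keys) hc)).trans (List.sublist_cons_self _ _)

theorem edges_sublist_of_child {c : KTree} {x : ℕ} {cs : List KTree} (hc : c ∈ cs) :
    c.edges.Sublist (node x cs).edges := by
  rw [edges_node]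
  exact (List.sublist_flatten_of_mem (List.mem_map_of_mem (f := edges) hc)).trans
    (List.sublist_append_right _ _)

theorem edge_mem_keys {t : KTree} {e : ℕ × ℕ} (he : e ∈ t.edges) :
    e.1 ∈ t.keys ∧ e.2 ∈ t.keys := by
  induction t using ind with
  | h x cs ih =>
    rw [edges_node] at he
    rcases List.mem_append.1 he with h1 | h1
    · obtain ⟨c, hc, rfl⟩ := List.mem_map.1 h1
      refine ⟨by simp [keys_node], ?_⟩
      rw [keys_node]
      exact List.mem_cons_of_mem _ (List.mem_flatten.2 ⟨c.keys, List.mem_map_of_mem (f := keys) hc, rootKey_mem_keys c⟩)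
    · obtain ⟨l, hl, hel⟩ := List.mem_flatten.1 h1
      obtain ⟨c, hc, rfl⟩ := List.mem_map.1 hl
      obtain ⟨h1, h2⟩ := ih c hc hel
      exact ⟨(keys_sublist_of_child hc).subset h1, (keys_sublist_of_child hc).subset h2⟩

theorem nodup_child {x : ℕ} {cs : List KTree} (h : (node x cs).keys.Nodup) {c : KTree}
    (hc : c ∈ cs) : c.keys.Nodup :=
  ((keys_sublist_of_child hc).nodup h : _)

theorem root_not_mem_child {x : ℕ} {cs : List KTree} (h : (node x cs).keys.Nodup) {c : KTree}
    (hc : c ∈ cs) : x ∉ c.keys := by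
  rw [keys_node, List.nodup_cons] at h
  intro hx
  exact h.1 ((List.sublist_flatten_of_mem (List.mem_map_of_mem (f := keys) hc)).subset hx)

theorem disjoint_children {x : ℕ} {cs : List KTree} (h : (node x cs).keys.Nodup)
    {i j : ℕ} (hi : i < cs.length) (hj : j < cs.length) (hij : i ≠ j) {a : ℕ}
    (ha : a ∈ cs[i].keys) (hb : a ∈ cs[j].keys) : False := by
  rw [keys_node, List.nodup_cons] at h
  have hpw := (List.nodup_flatten.1 h.2).2
  rw [List.pairwise_iff_getElem] at hpw
  rcases Nat.lt_or_ge i j with hlt | hge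
  · exact hpw i j (by simpa using hi) (by simpa using hj) hlt (by simpa using ha) (by simpa using hb)
  · have hlt : j < i := lt_of_le_of_ne hge (Ne.symm hij)
    exact hpw j i (by simpa using hj) (by simpa using hi) hlt (by simpa using hb) (by simpa using ha)

theorem subtreeAt_keys_sublist : ∀ (pos : List ℕ) (t s : KTree),
    subtreeAt t pos = some s → s.keys.Sublist t.keys
  | [], t, s, h => by rw [subtreeAt] at h; cases h; exact List.Sublist.refl _
  | i :: is, node x cs, s, h => by
    rw [subtreeAt] at h
    cases hc : cs[i]? with
    | none => rw [hc] at h; cases h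
    | some c =>
      rw [hc] at h
      have hmem : c ∈ cs := by
        obtain ⟨h1, h2⟩ := List.getElem?_eq_some_iff.1 hc
        exact h2 ▸ List.getElem_mem _
      exact (subtreeAt_keys_sublist is c s h).trans (keys_sublist_of_child hmem)

theorem subtreeAt_edges_sublist : ∀ (pos : List ℕ) (t s : KTree),
    subtreeAt t pos = some s → s.edges.Sublist t.edges
  | [], t, s, h => by rw [subtreeAt] at h; cases h; exact List.Sublist.refl _
  | i :: is, node x cs, s, h => by
    rw [subtreeAt] at h
    cases hc : cs[i]? with
    | none => rw [hc] at h; cases h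
    | some c =>
      rw [hc] at h
      have hmem : c ∈ cs := by
        obtain ⟨h1, h2⟩ := List.getElem?_eq_some_iff.1 hc
        exact h2 ▸ List.getElem_mem _
      exact (subtreeAt_edges_sublist is c s h).trans (edges_sublist_of_child hmem)

theorem subtreeAt_append : ∀ (p q : List ℕ) (t s : KTree),
    subtreeAt t p = some s → subtreeAt t (p ++ q) = subtreeAt s q
  | [], q, t, s, h => by rw [subtreeAt] at h; cases h; rfl
  | i :: is, q, node x cs, s, h => by
    rw [subtreeAt] at h
    cases hc : cs[i]? with
    | none => rw [hc] at h; cases h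
    | some c =>
      rw [hc] at h
      show subtreeAt (node x cs) (i :: (is ++ q)) = _
      rw [subtreeAt, hc]
      exact subtreeAt_append is q c s h

end KTree

namespace KTree

/-- `MemD t a d` : key `a` occurs at depth `d` in `t`. -/
inductive MemD : KTree → ℕ → ℕ → Prop
  | root (x : ℕ) (cs : List KTree) : MemD (node x cs) x 0
  | child (x : ℕ) (cs : List KTree) (c : KTree) (a d : ℕ) :
      c ∈ cs → MemD c a d → MemD (node x cs) a (d + 1)

theorem MemD.mem_keys {t : KTree} {a d : ℕ} (h : MemD t a d) : a ∈ t.keys := by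
  induction h with
  | root x cs => simp [keys_node]
  | child x cs c a d hc hm ih => exact (keys_sublist_of_child hc).subset ih

theorem memD_root (t : KTree) : MemD t t.rootKey 0 := by
  cases t with | node x cs => exact MemD.root x cs

theorem mem_of_getElem?' {α : Type*} {l : List α} {i : ℕ} {a : α} (h : l[i]? = some a) :
    a ∈ l := by
  obtain ⟨h1, h2⟩ := List.getElem?_eq_some_iff.1 h
  exact h2 ▸ List.getElem_mem h1

theorem memD_unique' : ∀ t : KTree, t.keys.Nodup → ∀ a d d', MemD t a d → MemD t a d' → d = d' := by
  intro t
  induction t using ind with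
  | h x cs ih =>
    intro hnd a d d' h1 h2
    cases h1 with
    | root =>
      cases h2 with
      | root => rfl
      | child _ _ c _ d₂ hc hm => exact absurd hm.mem_keys (root_not_mem_child hnd hc)
    | child _ _ c _ d₁ hc hm =>
      cases h2 with
      | root => exact absurd hm.mem_keys (root_not_mem_child hnd hc)
      | child _ _ c' _ d₂ hc' hm' =>
        obtain ⟨i, hi, rfl⟩ := List.getElem_of_mem hc
        obtain ⟨j, hj, rfl⟩ := List.getElem_of_mem hc'
        rcases eq_or_ne i j with rfl | hij
        · exact congrArg (· + 1) (ih _ hc (nodup_child hnd hc) _ _ _ hm hm')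
        · exact (disjoint_children hnd hi hj hij hm.mem_keys hm'.mem_keys).elim

theorem memD_unique {t : KTree} (hnd : t.keys.Nodup) {a d d' : ℕ}
    (h1 : MemD t a d) (h2 : MemD t a d') : d = d' :=
  memD_unique' t hnd a d d' h1 h2

theorem memD_of_edge {t : KTree} {a b : ℕ} (he : (a, b) ∈ t.edges) :
    ∃ d, MemD t a d ∧ MemD t b (d + 1) := by
  induction t using ind with
  | h x cs ih =>
    rw [edges_node] at he
    rcases List.mem_append.1 he with h1 | h1
    · obtain ⟨c, hc, hce⟩ := List.mem_map.1 h1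
      injection hce with h1 h2
      subst h1; subst h2
      exact ⟨0, MemD.root x cs, MemD.child x cs c c.rootKey 0 hc (memD_root c)⟩
    · obtain ⟨l, hl, hel⟩ := List.mem_flatten.1 h1
      obtain ⟨c, hc, rfl⟩ := List.mem_map.1 hl
      obtain ⟨d, hd1, hd2⟩ := ih c hc hel
      exact ⟨d + 1, MemD.child x cs c a d hc hd1, MemD.child x cs c b (d+1) hc hd2⟩

theorem memD_subtreeAt : ∀ (pos : List ℕ) (t s : KTree) (a d : ℕ),
    subtreeAt t pos = some s → MemD s a d → MemD t a (pos.length + d)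
  | [], t, s, a, d, h, hm => by rw [subtreeAt] at h; cases h; simpa using hm
  | i :: is, node x cs, s, a, d, h, hm => by
    rw [subtreeAt] at h
    cases hc : cs[i]? with
    | none => rw [hc] at h; cases h
    | some c =>
      rw [hc] at h
      have hmem : c ∈ cs := by
        obtain ⟨h1, h2⟩ := List.getElem?_eq_some_iff.1 hc
        exact h2 ▸ List.getElem_mem _
      have := memD_subtreeAt is c s a d h hm
      have h2 := MemD.child x cs c a (is.length + d) hmem this
      simpa [Nat.add_right_comm, Nat.add_assoc] using h2

theorem memD_rootKey_subtreeAt {pos : List ℕ} {t s : KTree} (h : subtreeAt t pos = some s) :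
    MemD t s.rootKey pos.length := by
  simpa using memD_subtreeAt pos t s s.rootKey 0 h (memD_root s)

theorem getD_eq_of_getElem? {cs : List KTree} {i : ℕ} {c : KTree} (h : cs[i]? = some c) :
    cs.getD i default = c := by
  rw [List.getD_eq_getElem?_getD, h]; rfl

theorem memD_attachLeaf : ∀ (pos : List ℕ) (t : KTree) (u : ℕ),
    (subtreeAt t pos).isSome → MemD (attachLeaf t pos u) u (pos.length + 1)
  | [], node x cs, u, _ => by
    rw [attachLeaf]
    exact MemD.child x _ (node u []) u 0 (by simp) (MemD.root u [])
  | i :: is, node x cs, u, h => by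
    rw [subtreeAt] at h
    cases hc : cs[i]? with
    | none => rw [hc] at h; simp [Option.isSome] at h
    | some c =>
      rw [hc] at h
      rw [attachLeaf, getD_eq_of_getElem? hc]
      have hi : i < cs.length := (List.getElem?_eq_some_iff.1 hc).1
      have hmem : attachLeaf c is u ∈ cs.set i (attachLeaf c is u) :=
        mem_of_getElem?' (List.getElem?_set_self (l := cs) (i := i) (a := attachLeaf c is u) hi)
      have := memD_attachLeaf is c u h
      have h2 := MemD.child x _ _ u (is.length + 1) hmem this
      simpa [Nat.add_right_comm] using h2

theorem keys_attachLeaf_mem {pos : List ℕ} {t : KTree} {u : ℕ}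
    (h : (subtreeAt t pos).isSome) : u ∈ (attachLeaf t pos u).keys :=
  (memD_attachLeaf pos t u h).mem_keys

end KTree

namespace KTree

theorem adj_iff {t : KTree} {a b : ℕ} :
    t.graph.Adj a b ↔ a ≠ b ∧ ((a, b) ∈ t.edges ∨ (b, a) ∈ t.edges) := by
  rw [graph, SimpleGraph.fromRel_adj]

theorem graph_le {s t : KTree} (h : ∀ e ∈ s.edges, e ∈ t.edges) : s.graph ≤ t.graph := by
  intro a b hab
  rw [adj_iff] at hab ⊢
  exact ⟨hab.1, hab.2.imp (h _) (h _)⟩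

theorem reachable_root : ∀ (t : KTree) (a : ℕ), a ∈ t.keys → t.graph.Reachable t.rootKey a := by
  intro t
  induction t using ind with
  | h x cs ih =>
    intro a ha
    rw [keys_node] at ha
    rcases List.mem_cons.1 ha with rfl | ha
    · rw [rootKey]
    · obtain ⟨l, hl, hal⟩ := List.mem_flatten.1 ha
      obtain ⟨c, hc, rfl⟩ := List.mem_map.1 hl
      have h1 : (node x cs).graph.Reachable c.rootKey a :=
        ((ih c hc a hal).mono (graph_le (fun e he => (edges_sublist_of_child hc).subset he)))
      have h2 : (node x cs).graph.Reachable x c.rootKey := by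
        rcases eq_or_ne x c.rootKey with heq | hne
        · exact heq ▸ SimpleGraph.Reachable.refl _
        · refine SimpleGraph.Adj.reachable ?_
          rw [adj_iff]
          refine ⟨hne, Or.inl ?_⟩
          rw [edges_node]
          exact List.mem_append_left _ (List.mem_map_of_mem hc)
      show (node x cs).graph.Reachable (node x cs).rootKey a
      rw [rootKey]
      exact h2.trans h1
    
theorem reachable_of_mem {t : KTree} {a b : ℕ} (ha : a ∈ t.keys) (hb : b ∈ t.keys) :
    t.graph.Reachable a b :=
  (reachable_root t a ha).symm.trans (reachable_root t b hb)

theorem walk_of_memD : ∀ {t : KTree} {a d : ℕ}, MemD t a d → t.keys.Nodup →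
    ∃ p : t.graph.Walk t.rootKey a, p.length = d := by
  intro t a d h
  induction h with
  | root x cs => exact fun _ => ⟨SimpleGraph.Walk.nil, rfl⟩
  | child x cs c a d hc hm ih =>
    intro hnd
    obtain ⟨p, hp⟩ := ih (nodup_child hnd hc)
    have hle : c.graph ≤ (node x cs).graph :=
      graph_le (fun e he => (edges_sublist_of_child hc).subset he)
    have hadj : (node x cs).graph.Adj x c.rootKey := by
      rw [adj_iff]
      refine ⟨fun heq => root_not_mem_child hnd hc (heq ▸ rootKey_mem_keys c), Or.inl ?_⟩
      rw [edges_node]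
      exact List.mem_append_left _ (List.mem_map_of_mem hc)
    refine ⟨SimpleGraph.Walk.cons hadj (p.mapLe hle), ?_⟩
    show (p.mapLe hle).length + 1 = d + 1
    rw [SimpleGraph.Walk.length_mapLe, hp]

theorem walk_depth_bound {t : KTree} (hnd : t.keys.Nodup) :
    ∀ {a b : ℕ} (p : t.graph.Walk a b) {da db : ℕ},
      MemD t a da → MemD t b db → da ≤ db + p.length := by
  intro a b p
  induction p with
  | nil => intro da db h1 h2; simp [memD_unique hnd h1 h2]
  | cons hadj q ih =>
    intro da db h1 h2
    rename_i a' c' b'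
    rw [adj_iff] at hadj
    rcases hadj.2 with he | he
    · obtain ⟨e, hme, hmc⟩ := memD_of_edge he
      have : da = e := memD_unique hnd h1 hme
      have h3 := ih hmc h2
      simp only [SimpleGraph.Walk.length_cons]
      omega
    · obtain ⟨e, hmc, hme⟩ := memD_of_edge he
      have : da = e + 1 := memD_unique hnd h1 hme
      have h3 := ih hmc h2
      simp only [SimpleGraph.Walk.length_cons]
      omega

theorem dist_depth_lb {t : KTree} (hnd : t.keys.Nodup) {a b : ℕ} {da db : ℕ}
    (h1 : MemD t a da) (h2 : MemD t b db) (hr : t.graph.Reachable a b) :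
    da ≤ db + t.graph.dist a b := by
  obtain ⟨p, hp⟩ := hr.exists_walk_length_eq_dist
  simpa [hp] using walk_depth_bound hnd p h1 h2

end KTree

section CutLemmas

open SimpleGraph

variable {Gr : SimpleGraph ℕ} {A : ℕ → Prop} {x : ℕ}

theorem cut_walk_ineq (hcut : ∀ a b, Gr.Adj a b → A a → ¬ A b → b = x) :
    ∀ {a w : ℕ} (p : Gr.Walk a w), ¬ A w → A a → Gr.Reachable a x →
      Gr.dist a x + Gr.dist x w ≤ p.length := by
  intro a w p
  induction p with
  | nil => intro hw ha _; exact absurd ha hw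
  | @cons a' c' w' hadj q ih =>
    intro hw ha hax
    by_cases hc : A c'
    · have hcx : Gr.Reachable c' x := (hadj.symm.reachable).trans hax
      have h1 := ih hw hc hcx
      have h2 : Gr.dist a' x ≤ 1 + Gr.dist c' x := by
        obtain ⟨r, hr⟩ := hcx.exists_walk_length_eq_dist
        have := Gr.dist_le (SimpleGraph.Walk.cons hadj r)
        simpa [hr, Nat.add_comm] using this
      simp only [SimpleGraph.Walk.length_cons]
      omega
    · have hcx : c' = x := hcut a' c' hadj ha hc
      subst hcx
      have h2 : Gr.dist a' c' ≤ 1 := by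
        simpa using Gr.dist_le (SimpleGraph.Walk.cons hadj SimpleGraph.Walk.nil)
      have h3 : Gr.dist c' w' ≤ q.length := Gr.dist_le q
      simp only [SimpleGraph.Walk.length_cons]
      omega

theorem cut_dist (hcut : ∀ a b, Gr.Adj a b → A a → ¬ A b → b = x) {u w : ℕ}
    (hu : A u) (hw : ¬ A w) (hruw : Gr.Reachable u w) (hrux : Gr.Reachable u x) :
    Gr.dist u w = Gr.dist u x + Gr.dist x w := by
  refine le_antisymm ?_ ?_
  · obtain ⟨p, hp⟩ := hrux.exists_walk_length_eq_dist
    obtain ⟨q, hq⟩ := (hrux.symm.trans hruw).exists_walk_length_eq_dist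
    have := Gr.dist_le (p.append q)
    simpa [hp, hq] using this
  · obtain ⟨p, hp⟩ := hruw.exists_walk_length_eq_dist
    simpa [hp] using cut_walk_ineq hcut p hw hu hrux

theorem cut_exit_support (hcut : ∀ a b, Gr.Adj a b → A a → ¬ A b → b = x) :
    ∀ {c b : ℕ} (p : Gr.Walk c b), ¬ A b → A c → x ∈ p.support := by
  intro c b p
  induction p with
  | nil => intro hb hc; exact absurd hc hb
  | @cons a' c' w' hadj q ih =>
    intro hb ha
    by_cases hc : A c'
    · simp only [SimpleGraph.Walk.support_cons]
      exact List.mem_cons_of_mem _ (ih hb hc)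
    · have : c' = x := hcut a' c' hadj ha hc
      subst this
      simp only [SimpleGraph.Walk.support_cons]
      exact List.mem_cons_of_mem _ q.start_mem_support

theorem avoid_walk (hcut : ∀ a b, Gr.Adj a b → A a → ¬ A b → b = x) :
    ∀ (n : ℕ) {a b : ℕ} (p : Gr.Walk a b), ¬ A b → p.length ≤ n → ¬ A a →
      ∃ q : Gr.Walk a b, q.length ≤ p.length ∧ q.support ⊆ p.support ∧ ∀ v ∈ q.support, ¬ A v := by
  intro n
  induction n with
  | zero =>
    intro a b p hb hlen ha
    cases p with
    | nil => exact ⟨SimpleGraph.Walk.nil, by simp, by simp, by simpa using ha⟩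
    | cons h q => simp at hlen
  | succ n ihn =>
    intro a b p hb hlen ha
    cases p with
    | nil => exact ⟨SimpleGraph.Walk.nil, by simp, by simp, by simpa using ha⟩
    | @cons _ c' _ hadj q =>
      have hqlen : q.length ≤ n := by
        simp only [SimpleGraph.Walk.length_cons] at hlen
        omega
      by_cases hc : A c'
      · have hax : a = x := hcut c' a hadj.symm hc ha
        have hxs : x ∈ q.support := cut_exit_support hcut q hb hc
        have hxs' : a ∈ q.support := hax ▸ hxs
        obtain ⟨q', hq1, hq2, hq3⟩ := ihn (q.dropUntil a hxs')
          (by exact hb) (le_trans (SimpleGraph.Walk.length_dropUntil_le q hxs') hqlen) ha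
        refine ⟨q', ?_, ?_, hq3⟩
        · have := SimpleGraph.Walk.length_dropUntil_le q hxs'
          simp only [SimpleGraph.Walk.length_cons]
          omega
        · intro v hv
          have h2 := SimpleGraph.Walk.support_dropUntil_subset q hxs' (hq2 hv)
          simp only [SimpleGraph.Walk.support_cons]
          exact List.mem_cons_of_mem _ h2
      · obtain ⟨q', hq1, hq2, hq3⟩ := ihn q hb hqlen hc
        refine ⟨SimpleGraph.Walk.cons hadj q', ?_, ?_, ?_⟩
        · simp only [SimpleGraph.Walk.length_cons]; omega
        · simp only [SimpleGraph.Walk.support_cons]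
          intro v hv
          rcases List.mem_cons.1 hv with rfl | hv
          · exact List.mem_cons_self
          · exact List.mem_cons_of_mem _ (hq2 hv)
        · intro v hv
          rcases List.mem_cons.1 (by simpa using hv) with rfl | hv
          · exact ha
          · exact hq3 v hv

theorem walk_transfer {Gr' : SimpleGraph ℕ} {P : ℕ → Prop}
    (htr : ∀ a b, Gr.Adj a b → P a → P b → Gr'.Adj a b) :
    ∀ {a b : ℕ} (p : Gr.Walk a b), (∀ v ∈ p.support, P v) →
      ∃ q : Gr'.Walk a b, q.length = p.length := by
  intro a b p
  induction p with
  | nil => intro _; exact ⟨SimpleGraph.Walk.nil, rfl⟩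
  | @cons a' c' w' hadj q ih =>
    intro hsup
    have hpa : P a' := hsup a' (by simp)
    have hpc : P c' := hsup c' (by simp [SimpleGraph.Walk.support_cons])
    obtain ⟨q', hq'⟩ := ih (fun v hv => hsup v (by simp [SimpleGraph.Walk.support_cons, hv]))
    exact ⟨SimpleGraph.Walk.cons (htr a' c' hadj hpa hpc) q', by simp [hq']⟩

end CutLemmas

namespace KTree

theorem root_not_mem_subtree : ∀ (pos : List ℕ) (c m : KTree), c.keys.Nodup →
    subtreeAt c pos = some m → pos ≠ [] → c.rootKey ∉ m.keys
  | [], _, _, _, _, hne => absurd rfl hne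
  | j :: js, node z es, m, hnd, h, _ => by
    rw [subtreeAt] at h
    cases hd : es[j]? with
    | none => rw [hd] at h; cases h
    | some d =>
      rw [hd] at h
      have hmem : d ∈ es := mem_of_getElem?' hd
      intro hz
      exact root_not_mem_child hnd hmem ((subtreeAt_keys_sublist js d m h).subset hz)

theorem pendant_edge : ∀ (pos : List ℕ) (t : KTree) {y : ℕ} {ds : List KTree} {i : ℕ} {s : KTree},
    t.keys.Nodup → subtreeAt t pos = some (node y ds) → ds[i]? = some s →
    ∀ e ∈ t.edges, (e.1 ∈ s.keys ∨ e.2 ∈ s.keys) → (e ∈ s.edges ∨ e = (y, s.rootKey))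
  | [], t, y, ds, i, s, hnd, hq, hi, e, he, hmem => by
    rw [subtreeAt] at hq
    cases hq
    have hilen : i < ds.length := (List.getElem?_eq_some_iff.1 hi).1
    have his : ds[i] = s := (List.getElem?_eq_some_iff.1 hi).2
    have hsm : s ∈ ds := mem_of_getElem?' hi
    rw [edges_node] at he
    rcases List.mem_append.1 he with h1 | h1
    · obtain ⟨c, hc, hce⟩ := List.mem_map.1 h1
      obtain ⟨j, hj, rfl⟩ := List.getElem_of_mem hc
      rcases eq_or_ne j i with rfl | hij
      · right; rw [← hce, his]
      · exfalso
        subst hce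
        rcases hmem with hm | hm
        · exact root_not_mem_child hnd hsm hm
        · exact disjoint_children hnd hj hilen hij (rootKey_mem_keys _) (his ▸ hm)
    · obtain ⟨l, hl, hel⟩ := List.mem_flatten.1 h1
      obtain ⟨c, hc, rfl⟩ := List.mem_map.1 hl
      obtain ⟨j, hj, rfl⟩ := List.getElem_of_mem hc
      rcases eq_or_ne j i with rfl | hij
      · left; rw [← his]; exact hel
      · exfalso
        obtain ⟨hk1, hk2⟩ := edge_mem_keys hel
        rcases hmem with hm | hm
        · exact disjoint_children hnd hj hilen hij hk1 (his ▸ hm)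
        · exact disjoint_children hnd hj hilen hij hk2 (his ▸ hm)
  | j₀ :: is, node z es, y, ds, i, s, hnd, hq, hi, e, he, hmem => by
    rw [subtreeAt] at hq
    cases hc : es[j₀]? with
    | none => rw [hc] at hq; cases hq
    | some c =>
      rw [hc] at hq
      have hj₀len : j₀ < es.length := (List.getElem?_eq_some_iff.1 hc).1
      have hj₀val : es[j₀] = c := (List.getElem?_eq_some_iff.1 hc).2
      have hcmem : c ∈ es := mem_of_getElem?' hc
      have hskeys : s.keys.Sublist c.keys :=
        (keys_sublist_of_child (x := y) (mem_of_getElem?' hi)).trans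
          (subtreeAt_keys_sublist is c _ hq)
      have hsub' : subtreeAt c (is ++ [i]) = some s := by
        rw [subtreeAt_append is [i] c _ hq]
        rw [subtreeAt, hi]
        simp [subtreeAt]
      rw [edges_node] at he
      rcases List.mem_append.1 he with h1 | h1
      · obtain ⟨d, hd, hde⟩ := List.mem_map.1 h1
        obtain ⟨j, hj, rfl⟩ := List.getElem_of_mem hd
        exfalso
        subst hde
        rcases hmem with hm | hm
        · exact root_not_mem_child hnd hcmem (hskeys.subset hm)
        · rcases eq_or_ne j j₀ with rfl | hij
          · have hnr : c.rootKey ∉ s.keys :=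
              root_not_mem_subtree (is ++ [i]) c s (nodup_child hnd hcmem) hsub' (by simp)
            exact hnr (hj₀val ▸ hm)
          · exact disjoint_children hnd hj hj₀len hij (rootKey_mem_keys _)
              (hj₀val ▸ hskeys.subset hm)
      · obtain ⟨l, hl, hel⟩ := List.mem_flatten.1 h1
        obtain ⟨d, hd, rfl⟩ := List.mem_map.1 hl
        obtain ⟨j, hj, rfl⟩ := List.getElem_of_mem hd
        rcases eq_or_ne j j₀ with rfl | hij
        · exact pendant_edge is c (nodup_child hnd hcmem) hq hi e (hj₀val ▸ hel) hmem
        · exfalso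
          obtain ⟨hk1, hk2⟩ := edge_mem_keys hel
          rcases hmem with hm | hm
          · exact disjoint_children hnd hj hj₀len hij hk1 (hj₀val ▸ hskeys.subset hm)
          · exact disjoint_children hnd hj hj₀len hij hk2 (hj₀val ▸ hskeys.subset hm)

theorem pendant_cut {t : KTree} {pos : List ℕ} {y : ℕ} {ds : List KTree} {i : ℕ} {s : KTree}
    (hnd : t.keys.Nodup) (hq : subtreeAt t pos = some (node y ds)) (hi : ds[i]? = some s) :
    ∀ a b, t.graph.Adj a b → a ∈ s.keys → b ∉ s.keys → b = y := by
  intro a b hadj ha hb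
  have hndq : (node y ds).keys.Nodup := (subtreeAt_keys_sublist pos t _ hq).nodup hnd
  have hynotins : y ∉ s.keys := root_not_mem_child hndq (mem_of_getElem?' hi)
  rw [adj_iff] at hadj
  rcases hadj.2 with he | he
  · rcases pendant_edge pos t hnd hq hi _ he (Or.inl ha) with h1 | h1
    · exact absurd (edge_mem_keys h1).2 hb
    · have h2 : a = y := by simpa using congrArg Prod.fst h1
      exact absurd (h2 ▸ ha) hynotins
  · rcases pendant_edge pos t hnd hq hi _ he (Or.inr ha) with h1 | h1
    · exact absurd (edge_mem_keys h1).1 hb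
    · simpa using congrArg Prod.fst h1

end KTree

namespace KTree

def km (t : KTree) : Multiset ℕ := (t.keys : Multiset ℕ)

def em (t : KTree) : Multiset (ℕ × ℕ) := (t.edges : Multiset (ℕ × ℕ))

theorem coe_flatten {α : Type*} (L : List (List α)) :
    ((L.flatten : List α) : Multiset α) = (L.map Multiset.ofList).sum := by
  induction L with
  | nil => rfl
  | cons h t ih => simp only [List.flatten_cons, List.map_cons, List.sum_cons,
      ← Multiset.coe_add, ih]

theorem km_node (x : ℕ) (cs : List KTree) :
    km (node x cs) = x ::ₘ (cs.map km).sum := by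
  rw [km, keys_node]
  rw [← Multiset.cons_coe, coe_flatten, List.map_map]
  rfl

theorem em_node (x : ℕ) (cs : List KTree) :
    em (node x cs) = ((cs.map fun c => (x, c.rootKey)) : Multiset (ℕ × ℕ)) + (cs.map em).sum := by
  rw [em, edges_node]
  rw [← Multiset.coe_add, coe_flatten, List.map_map]
  rfl

theorem sum_map_set {β : Type*} [AddCommMonoid β] (f : KTree → β) :
    ∀ (cs : List KTree) (i : ℕ) (c' : KTree) (h : i < cs.length),
      ((cs.set i c').map f).sum + f (cs[i]'h) = (cs.map f).sum + f c'
  | [], i, c', h => by simp at h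
  | c :: tl, 0, c', h => by simp [add_comm, add_left_comm, add_assoc]
  | c :: tl, i + 1, c', h => by
    have ih := sum_map_set f tl i c' (by simpa using Nat.lt_of_succ_lt_succ h)
    simp only [List.set_cons_succ, List.map_cons, List.sum_cons, List.getElem_cons_succ]
    rw [add_assoc, ih, add_assoc]

theorem set_self_of_eq {α : Type*} (l : List α) (i : ℕ) (a : α) (h : i < l.length)
    (ha : a = l[i]) : l.set i a = l := by
  subst ha
  apply List.ext_getElem (by simp)
  intro j h1 h2
  rw [List.getElem_set]
  split
  · subst ‹i = j›; rfl
  · rfl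

theorem rootKey_attachLeaf (t : KTree) (pos : List ℕ) (u : ℕ) :
    (attachLeaf t pos u).rootKey = t.rootKey := by
  cases t with
  | node x cs => cases pos with
    | nil => rw [attachLeaf, rootKey, rootKey]
    | cons i is => rw [attachLeaf, rootKey, rootKey]

theorem km_attachLeaf : ∀ (pos : List ℕ) (t : KTree) (u : ℕ),
    (subtreeAt t pos).isSome → km (attachLeaf t pos u) = u ::ₘ km t
  | [], node x cs, u, _ => by
    rw [attachLeaf, km_node, km_node]
    simp only [List.map_append, List.sum_append, List.map_cons, List.map_nil, List.sum_cons,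
      List.sum_nil, km_node, add_zero]
    refine Multiset.ext.2 fun a => ?_
    simp only [Multiset.count_add, Multiset.count_cons, Multiset.count_zero]
    omega
  | i :: is, node x cs, u, h => by
    rw [subtreeAt] at h
    cases hc : cs[i]? with
    | none => rw [hc] at h; simp at h
    | some c =>
      rw [hc] at h
      have hi : i < cs.length := (List.getElem?_eq_some_iff.1 hc).1
      have hiv : cs[i] = c := (List.getElem?_eq_some_iff.1 hc).2
      rw [attachLeaf, getD_eq_of_getElem? hc, km_node, km_node]
      have hsum := sum_map_set km cs i (attachLeaf c is u) hi
      rw [hiv, km_attachLeaf is c u h] at hsum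
      refine Multiset.ext.2 fun a => ?_
      have hcnt := congrArg (Multiset.count a) hsum
      simp only [Multiset.count_add, Multiset.count_cons] at hcnt ⊢
      split_ifs at hcnt ⊢ <;> omega

theorem km_replaceAt : ∀ (pos : List ℕ) (t s r : KTree),
    subtreeAt t pos = some s → km (replaceAt t pos r) + km s = km t + km r
  | [], t, s, r, h => by
    rw [subtreeAt] at h; cases h
    rw [replaceAt, add_comm]
  | i :: is, node x cs, s, r, h => by
    rw [subtreeAt] at h
    cases hc : cs[i]? with
    | none => rw [hc] at h; cases h
    | some c =>
      rw [hc] at h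
      have hi : i < cs.length := (List.getElem?_eq_some_iff.1 hc).1
      have hiv : cs[i] = c := (List.getElem?_eq_some_iff.1 hc).2
      rw [replaceAt, getD_eq_of_getElem? hc, km_node, km_node]
      have hsum := sum_map_set km cs i (replaceAt c is r) hi
      rw [hiv] at hsum
      have ih := km_replaceAt is c s r h
      refine Multiset.ext.2 fun a => ?_
      have h1 := congrArg (Multiset.count a) hsum
      have h2 := congrArg (Multiset.count a) ih
      simp only [Multiset.count_add, Multiset.count_cons] at h1 h2 ⊢
      split_ifs at h1 h2 ⊢ <;> omega

theorem rootKey_replaceAt : ∀ (pos : List ℕ) (t s r : KTree),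
    subtreeAt t pos = some s → r.rootKey = s.rootKey →
    (replaceAt t pos r).rootKey = t.rootKey
  | [], t, s, r, h, hr => by
    rw [subtreeAt] at h; cases h
    rw [replaceAt, hr]
  | i :: is, node x cs, s, r, h, hr => by
    rw [replaceAt, rootKey, rootKey]

theorem em_replaceAt : ∀ (pos : List ℕ) (t s r : KTree),
    subtreeAt t pos = some s → r.rootKey = s.rootKey →
    em (replaceAt t pos r) + em s = em t + em r
  | [], t, s, r, h, hr => by
    rw [subtreeAt] at h; cases h
    rw [replaceAt, add_comm]
  | i :: is, node x cs, s, r, h, hr => by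
    rw [subtreeAt] at h
    cases hc : cs[i]? with
    | none => rw [hc] at h; cases h
    | some c =>
      rw [hc] at h
      have hi : i < cs.length := (List.getElem?_eq_some_iff.1 hc).1
      have hiv : cs[i] = c := (List.getElem?_eq_some_iff.1 hc).2
      rw [replaceAt, getD_eq_of_getElem? hc, em_node, em_node]
      have hroot : (replaceAt c is r).rootKey = c.rootKey := rootKey_replaceAt is c s r h hr
      have hpar : (cs.set i (replaceAt c is r)).map (fun d => (x, d.rootKey))
          = cs.map (fun d => (x, d.rootKey)) := by
        rw [List.map_set]
        exact set_self_of_eq _ i _ (by simpa using hi)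
          (by rw [List.getElem_map, hiv, hroot])
      rw [hpar]
      have hsum := sum_map_set em cs i (replaceAt c is r) hi
      rw [hiv] at hsum
      have ih := em_replaceAt is c s r h hr
      refine Multiset.ext.2 fun a => ?_
      have h1 := congrArg (Multiset.count a) hsum
      have h2 := congrArg (Multiset.count a) ih
      simp only [Multiset.count_add, Multiset.count_cons] at h1 h2 ⊢
      omega

theorem subtreeAt_replaceAt : ∀ (pos : List ℕ) (t r : KTree),
    (subtreeAt t pos).isSome → subtreeAt (replaceAt t pos r) pos = some r
  | [], t, r, _ => by rw [replaceAt, subtreeAt]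
  | i :: is, node x cs, r, h => by
    rw [subtreeAt] at h
    cases hc : cs[i]? with
    | none => rw [hc] at h; simp at h
    | some c =>
      rw [hc] at h
      have hi : i < cs.length := (List.getElem?_eq_some_iff.1 hc).1
      rw [replaceAt, getD_eq_of_getElem? hc, subtreeAt,
        List.getElem?_set_self (by simpa using hi)]
      exact subtreeAt_replaceAt is c r h

end KTree

open KTree

set_option maxHeartbeats 1600000 in
/-- in the setting of the push-up lemma (sibling weakly-complete `k`-ary
subtrees `T` of height `h₂` and `S` of height `h₁ = height S'` measured after the move,
`h₂ > h₁`, with `|V(T)| + |V(S)| ≤ n / (9k)`), the quantity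
`Δ₃ = Σ_{w ∈ V(R)} d_G(u,w) − Σ_{w ∈ V(R)} d_G(v,w)` — where `u` is the moved leaf's old
position (distances in the old tree `G`) and `v` its new position (distances in the new
tree `G'`), and `R = G ∖ (V(S) ∪ V(T))` — satisfies
`Δ₃ = (h₂ − h₁)·|V(R)| ≥ (h₂ − h₁)·(9k − 1)·(|V(T)| + |V(S)|) > 8k·|V(T)|`. -/
theorem pushUp_Delta3
    (k n : ℕ) (G : KTree) (hn : G.size = n) (hnd : G.keys.Nodup)
    (P : List ℕ) (x : ℕ) (cs : List KTree)
    (hP : subtreeAt G P = some (node x cs))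
    (iT iS : ℕ) (hne : iT ≠ iS)
    (T S : KTree) (hT : cs[iT]? = some T) (hS : cs[iS]? = some S)
    (u : ℕ) (T₀ : KTree) (posT : List ℕ)
    (hTdecomp : T = attachLeaf T₀ posT u)
    (hposT : (subtreeAt T₀ posT).isSome)
    (hlastT : posT.length + 1 = T.height)
    (posS : List ℕ) (hposS : (subtreeAt S posS).isSome)
    (S' : KTree) (hS' : S' = attachLeaf S posS u)
    (hlastS : posS.length + 1 = S'.height)
    (hwcT : WeaklyComplete k T) (hwcS' : WeaklyComplete k S')
    (hheights : S'.height < T.height)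
    (hsize : 9 * k * (T.size + S.size) ≤ n)
    (G' : KTree) (hG' : G' = replaceAt G P (node x ((cs.set iT T₀).set iS S')))
    (R : Finset ℕ) (hR : R = G.keys.toFinset \ (T.keys.toFinset ∪ S.keys.toFinset)) :
    ((∑ w ∈ R, (G.dist u w : ℤ)) - ∑ w ∈ R, (G'.dist u w : ℤ)
        = ((T.height : ℤ) - (S'.height : ℤ)) * R.card)
    ∧ (((T.height : ℤ) - (S'.height : ℤ)) * (9 * k - 1) * (T.size + S.size)
        ≤ (∑ w ∈ R, (G.dist u w : ℤ)) - ∑ w ∈ R, (G'.dist u w : ℤ))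
    ∧ ((8 * k * T.size : ℤ)
        < (∑ w ∈ R, (G.dist u w : ℤ)) - ∑ w ∈ R, (G'.dist u w : ℤ)) := by
  classical
  -- index facts
  have hiTlen : iT < cs.length := (List.getElem?_eq_some_iff.1 hT).1
  have hiTval : cs[iT] = T := (List.getElem?_eq_some_iff.1 hT).2
  have hiSlen : iS < cs.length := (List.getElem?_eq_some_iff.1 hS).1
  have hiSval : cs[iS] = S := (List.getElem?_eq_some_iff.1 hS).2
  have hTmem : T ∈ cs := mem_of_getElem?' hT
  have hSmem : S ∈ cs := mem_of_getElem?' hS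
  -- subtree positions in G
  have hPsome : (subtreeAt G P).isSome := by rw [hP]; rfl
  have hPT : subtreeAt G (P ++ [iT]) = some T := by
    rw [subtreeAt_append P [iT] G _ hP, subtreeAt, hT]; simp [subtreeAt]
  have hPS : subtreeAt G (P ++ [iS]) = some S := by
    rw [subtreeAt_append P [iS] G _ hP, subtreeAt, hS]; simp [subtreeAt]
  -- nodup facts
  have hndxcs : (node x cs).keys.Nodup := (subtreeAt_keys_sublist P G _ hP).nodup hnd
  have hndT : T.keys.Nodup := nodup_child hndxcs hTmem
  have hndS : S.keys.Nodup := nodup_child hndxcs hSmem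
  -- k ≥ 1
  have hk1 : 1 ≤ k := by
    rcases Nat.eq_zero_or_pos k with rfl | h
    · exfalso
      obtain ⟨hdeg, -⟩ := hwcT
      revert hdeg hlastT
      cases T with | node y ts =>
      intro hlast hdeg
      rw [DegLE] at hdeg
      have hdeg1 : ts.length ≤ 0 := hdeg.1
      have hts : ts = [] := List.eq_nil_of_length_eq_zero (by omega)
      subst hts
      have h0 : (node y []).height = 0 := by simp [height]
      omega
    · exact h
  -- u and depths
  have hMuT : MemD T u T.height := by
    have h0 : MemD (attachLeaf T₀ posT u) u (posT.length + 1) := memD_attachLeaf posT T₀ u hposT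
    rw [← hTdecomp, hlastT] at h0
    exact h0
  have huT : u ∈ T.keys := hMuT.mem_keys
  have hMuS' : MemD S' u S'.height := by
    have h0 : MemD (attachLeaf S posS u) u (posS.length + 1) := memD_attachLeaf posS S u hposS
    rw [← hS', hlastS] at h0
    exact h0
  have huS' : u ∈ S'.keys := hMuS'.mem_keys
  have hxT : x ∉ T.keys := root_not_mem_child hndxcs hTmem
  have hxS : x ∉ S.keys := root_not_mem_child hndxcs hSmem
  have huS : u ∉ S.keys := fun hu =>
    disjoint_children hndxcs hiTlen hiSlen hne (by rw [hiTval]; exact huT)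
      (by rw [hiSval]; exact hu)
  have hxu : x ≠ u := fun h => hxT (h ▸ huT)
  -- keys multisets
  have hkmT : km T = u ::ₘ km T₀ := by rw [hTdecomp]; exact km_attachLeaf posT T₀ u hposT
  have hkmS' : km S' = u ::ₘ km S := by rw [hS']; exact km_attachLeaf posS S u hposS
  set cs' : List KTree := (cs.set iT T₀).set iS S' with hcs'
  have hlen' : cs'.length = cs.length := by simp [hcs']
  have hcs'T : cs'[iT]? = some T₀ := by
    rw [hcs', List.getElem?_set_ne (Ne.symm hne), List.getElem?_set_self (by simpa using hiTlen)]
  have hcs'S : cs'[iS]? = some S' := by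
    rw [hcs', List.getElem?_set_self (by simpa using hiSlen)]
  have hmidS : (cs.set iT T₀)[iS]'(by simpa using hiSlen) = S := by
    rw [List.getElem_set]
    simp [hne, hiSval]
  have hsum1 := sum_map_set km cs iT T₀ hiTlen
  rw [hiTval] at hsum1
  have hsum2 := sum_map_set km (cs.set iT T₀) iS S' (by simpa using hiSlen)
  rw [hmidS, ← hcs'] at hsum2
  have hkmnode : km (node x cs') = km (node x cs) := by
    rw [km_node, km_node]
    refine Multiset.ext.2 fun a => ?_
    have h1 := congrArg (Multiset.count a) hsum1
    have h2 := congrArg (Multiset.count a) hsum2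
    have h3 := congrArg (Multiset.count a) hkmT
    have h4 := congrArg (Multiset.count a) hkmS'
    simp only [Multiset.count_add, Multiset.count_cons] at h1 h2 h3 h4 ⊢
    split_ifs at h1 h2 h3 h4 ⊢ <;> omega
  have hkmG' : km G' = km G := by
    have h0 := km_replaceAt P G (node x cs) (node x cs') hP
    rw [← hG'] at h0
    refine Multiset.ext.2 fun a => ?_
    have h1 := congrArg (Multiset.count a) h0
    have h2 := congrArg (Multiset.count a) hkmnode
    simp only [Multiset.count_add] at h1 h2 ⊢
    omega
  have hndG' : G'.keys.Nodup := by
    have h1 : (km G').Nodup := hkmG' ▸ (Multiset.coe_nodup.2 hnd)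
    exact Multiset.coe_nodup.1 h1
  have hmemG' : ∀ a, a ∈ G'.keys ↔ a ∈ G.keys := by
    intro a
    rw [← Multiset.mem_coe, ← Multiset.mem_coe]
    show a ∈ km G' ↔ a ∈ km G
    rw [hkmG']
  -- edges multisets
  have hrootT₀ : T₀.rootKey = T.rootKey := by rw [hTdecomp, rootKey_attachLeaf]
  have hrootS' : S'.rootKey = S.rootKey := by rw [hS', rootKey_attachLeaf]
  have hpar : cs'.map (fun d => (x, d.rootKey)) = cs.map (fun d => (x, d.rootKey)) := by
    apply List.ext_getElem (by simp [hlen'])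
    intro j h1 h2
    simp only [List.getElem_map, hcs', List.getElem_set]
    rcases eq_or_ne iS j with rfl | hjS
    · simp [hrootS', hiSval]
    · rcases eq_or_ne iT j with rfl | hjT
      · simp [hjS, hrootT₀, hiTval]
      · simp [hjS, hjT]
  have hesum1 := sum_map_set em cs iT T₀ hiTlen
  rw [hiTval] at hesum1
  have hesum2 := sum_map_set em (cs.set iT T₀) iS S' (by simpa using hiSlen)
  rw [hmidS, ← hcs'] at hesum2
  have hEM : em G' + em T + em S = em G + em T₀ + em S' := by
    have h0 := em_replaceAt P G (node x cs) (node x cs') hP (by rw [rootKey, rootKey])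
    rw [← hG'] at h0
    have hemnode := congrArg em (rfl : node x cs' = node x cs')
    refine Multiset.ext.2 fun a => ?_
    have h1 := congrArg (Multiset.count a) h0
    have h2 := congrArg (Multiset.count a) hesum1
    have h3 := congrArg (Multiset.count a) hesum2
    have h4 := congrArg (Multiset.count a) (em_node x cs')
    have h5 := congrArg (Multiset.count a) (em_node x cs)
    have h6 := congrArg (Multiset.count a) (congrArg Multiset.ofList hpar)
    simp only [Multiset.count_add] at h1 h2 h3 h4 h5 h6 ⊢
    omega
  -- edge transfers
  have htrans1 : ∀ e : ℕ × ℕ, e ∈ G.edges → e.1 ∉ T.keys → e.1 ∉ S.keys →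
      e.2 ∉ T.keys → e.2 ∉ S.keys → e ∈ G'.edges := by
    intro e he h1 h2 h3 h4
    have hm : e ∈ em G' + em T + em S := by
      have : e ∈ em G + em T₀ + em S' :=
        Multiset.mem_add.2 (Or.inl (Multiset.mem_add.2 (Or.inl (Multiset.mem_coe.2 he))))
      rwa [← hEM] at this
    rcases Multiset.mem_add.1 hm with hm1 | hm1
    · rcases Multiset.mem_add.1 hm1 with hm2 | hm2
      · exact Multiset.mem_coe.1 hm2
      · exact absurd (edge_mem_keys (Multiset.mem_coe.1 hm2)).1 h1
    · exact absurd (edge_mem_keys (Multiset.mem_coe.1 hm1)).1 h2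
  have htrans2 : ∀ e : ℕ × ℕ, e ∈ G'.edges → e.1 ∉ T₀.keys → e.1 ∉ S'.keys →
      e.2 ∉ T₀.keys → e.2 ∉ S'.keys → e ∈ G.edges := by
    intro e he h1 h2 h3 h4
    have hm : e ∈ em G + em T₀ + em S' := by
      have : e ∈ em G' + em T + em S :=
        Multiset.mem_add.2 (Or.inl (Multiset.mem_add.2 (Or.inl (Multiset.mem_coe.2 he))))
      rwa [hEM] at this
    rcases Multiset.mem_add.1 hm with hm1 | hm1
    · rcases Multiset.mem_add.1 hm1 with hm2 | hm2
      · exact Multiset.mem_coe.1 hm2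
      · exact absurd (edge_mem_keys (Multiset.mem_coe.1 hm2)).1 h1
    · exact absurd (edge_mem_keys (Multiset.mem_coe.1 hm1)).1 h2
  -- key-set relations
  have hT₀sub : ∀ a, a ∈ T₀.keys → a ∈ T.keys := by
    intro a ha
    have : a ∈ km T := by rw [hkmT]; exact Multiset.mem_cons_of_mem (Multiset.mem_coe.2 ha)
    exact Multiset.mem_coe.1 this
  have hS'iff : ∀ a, a ∈ S'.keys ↔ a = u ∨ a ∈ S.keys := by
    intro a
    constructor
    · intro ha
      have : a ∈ km S' := Multiset.mem_coe.2 ha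
      rw [hkmS'] at this
      exact (Multiset.mem_cons.1 this).imp id Multiset.mem_coe.1
    · intro ha
      have : a ∈ km S' := by
        rw [hkmS']
        rcases ha with rfl | ha
        · exact Multiset.mem_cons_self _ _
        · exact Multiset.mem_cons_of_mem (Multiset.mem_coe.2 ha)
      exact Multiset.mem_coe.1 this
  have hxT₀ : x ∉ T₀.keys := fun h => hxT (hT₀sub x h)
  have hxS' : x ∉ S'.keys := fun h => by
    rcases (hS'iff x).1 h with h1 | h1
    · exact hxu h1
    · exact hxS h1
  -- cut properties
  have hcutT : ∀ a b, G.graph.Adj a b → a ∈ T.keys → b ∉ T.keys → b = x :=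
    pendant_cut hnd hP hT
  have hcutS : ∀ a b, G.graph.Adj a b → a ∈ S.keys → b ∉ S.keys → b = x :=
    pendant_cut hnd hP hS
  have hG'P : subtreeAt G' P = some (node x cs') := by
    rw [hG']; exact subtreeAt_replaceAt P G _ hPsome
  have hcutT₀ : ∀ a b, G'.graph.Adj a b → a ∈ T₀.keys → b ∉ T₀.keys → b = x :=
    pendant_cut hndG' hG'P hcs'T
  have hcutS' : ∀ a b, G'.graph.Adj a b → a ∈ S'.keys → b ∉ S'.keys → b = x :=
    pendant_cut hndG' hG'P hcs'S
  -- membership in G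
  have hxG : x ∈ G.keys := (subtreeAt_keys_sublist P G _ hP).subset (by rw [keys_node]; exact List.mem_cons_self)
  have huG : u ∈ G.keys := (subtreeAt_keys_sublist (P ++ [iT]) G T hPT).subset huT
  have hxG' : x ∈ G'.keys := (hmemG' x).2 hxG
  have huG' : u ∈ G'.keys := (hmemG' u).2 huG
  -- distances u-x
  have hndxcs' : (node x cs').keys.Nodup := (subtreeAt_keys_sublist P G' _ hG'P).nodup hndG'
  have hS'mem : S' ∈ cs' := mem_of_getElem?' hcs'S
  have hPS' : subtreeAt G' (P ++ [iS]) = some S' := by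
    rw [subtreeAt_append P [iS] G' _ hG'P, subtreeAt, hcs'S]; simp [subtreeAt]
  have hdux : G.graph.dist u x = T.height + 1 := by
    have hMnode : MemD (node x cs) u (T.height + 1) := MemD.child x cs T u T.height hTmem hMuT
    obtain ⟨p, hp⟩ := walk_of_memD hMnode hndxcs
    have hle : (node x cs).graph ≤ G.graph :=
      graph_le (fun e he => (subtreeAt_edges_sublist P G _ hP).subset he)
    have hub : G.graph.dist x u ≤ T.height + 1 := by
      have := SimpleGraph.dist_le (p.mapLe hle)
      rw [SimpleGraph.Walk.length_mapLe, hp] at this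
      simpa [rootKey] using this
    have hMGu : MemD G u (P.length + 1 + T.height) := by
      have := memD_subtreeAt (P ++ [iT]) G T u T.height hPT hMuT
      simpa [Nat.add_right_comm, Nat.add_assoc] using this
    have hMGx : MemD G x P.length := memD_rootKey_subtreeAt hP
    have hlb := dist_depth_lb hnd hMGu hMGx (reachable_of_mem huG hxG)
    rw [SimpleGraph.dist_comm] at hub
    omega
  have hdux' : G'.graph.dist u x = S'.height + 1 := by
    have hMnode : MemD (node x cs') u (S'.height + 1) :=
      MemD.child x cs' S' u S'.height hS'mem hMuS'
    obtain ⟨p, hp⟩ := walk_of_memD hMnode hndxcs'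
    have hle : (node x cs').graph ≤ G'.graph :=
      graph_le (fun e he => (subtreeAt_edges_sublist P G' _ hG'P).subset he)
    have hub : G'.graph.dist x u ≤ S'.height + 1 := by
      have := SimpleGraph.dist_le (p.mapLe hle)
      rw [SimpleGraph.Walk.length_mapLe, hp] at this
      simpa [rootKey] using this
    have hMGu : MemD G' u (P.length + 1 + S'.height) := by
      have := memD_subtreeAt (P ++ [iS]) G' S' u S'.height hPS' hMuS'
      simpa [Nat.add_right_comm, Nat.add_assoc] using this
    have hMGx : MemD G' x P.length := memD_rootKey_subtreeAt hG'P
    have hlb := dist_depth_lb hndG' hMGu hMGx (reachable_of_mem huG' hxG')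
    rw [SimpleGraph.dist_comm] at hub
    omega
  -- pointwise difference on R
  have key : ∀ w ∈ R, (G.dist u w : ℤ) - (G'.dist u w : ℤ) = (T.height : ℤ) - S'.height := by
    intro w hw
    rw [hR, Finset.mem_sdiff, Finset.mem_union] at hw
    obtain ⟨hwG, hwTS⟩ := hw
    rw [List.mem_toFinset] at hwG
    have hwT : w ∉ T.keys := fun h => hwTS (Or.inl (List.mem_toFinset.2 h))
    have hwS : w ∉ S.keys := fun h => hwTS (Or.inr (List.mem_toFinset.2 h))
    have hwu : w ≠ u := fun h => hwT (h ▸ huT)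
    have hwS' : w ∉ S'.keys := fun h => by
      rcases (hS'iff w).1 h with h1 | h1
      · exact hwu h1
      · exact hwS h1
    have hwT₀ : w ∉ T₀.keys := fun h => hwT (hT₀sub w h)
    have hwG' : w ∈ G'.keys := (hmemG' w).2 hwG
    have e1 : G.graph.dist u w = G.graph.dist u x + G.graph.dist x w :=
      cut_dist (A := fun a => a ∈ T.keys) hcutT huT hwT
        (reachable_of_mem huG hwG) (reachable_of_mem huG hxG)
    have e2 : G'.graph.dist u w = G'.graph.dist u x + G'.graph.dist x w :=
      cut_dist (A := fun a => a ∈ S'.keys) hcutS' huS' hwS'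
        (reachable_of_mem huG' hwG') (reachable_of_mem huG' hxG')
    have e3 : G.graph.dist x w = G'.graph.dist x w := by
      refine le_antisymm ?_ ?_
      · obtain ⟨p, hp⟩ := (reachable_of_mem hxG' hwG').exists_walk_length_eq_dist
        obtain ⟨q1, hq1len, hq1sup, hq1av⟩ :=
          avoid_walk (A := fun v => v ∈ T₀.keys) hcutT₀ p.length p hwT₀ le_rfl hxT₀
        obtain ⟨q2, hq2len, hq2sup, hq2av⟩ :=
          avoid_walk (A := fun v => v ∈ S'.keys) hcutS' q1.length q1 hwS' le_rfl hxS'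
        have hq2avT : ∀ v ∈ q2.support, v ∉ T₀.keys := fun v hv => hq1av v (hq2sup hv)
        obtain ⟨q3, hq3⟩ := walk_transfer
          (P := fun v => v ∉ T₀.keys ∧ v ∉ S'.keys)
          (Gr' := G.graph)
          (fun a b hadj hpa hpb => by
            rw [adj_iff] at hadj ⊢
            refine ⟨hadj.1, ?_⟩
            rcases hadj.2 with he | he
            · exact Or.inl (htrans2 _ he hpa.1 hpa.2 hpb.1 hpb.2)
            · exact Or.inr (htrans2 _ he hpb.1 hpb.2 hpa.1 hpa.2))
          q2 (fun v hv => ⟨hq2avT v hv, hq2av v hv⟩)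
        have := SimpleGraph.dist_le q3
        omega
      · obtain ⟨p, hp⟩ := (reachable_of_mem hxG hwG).exists_walk_length_eq_dist
        obtain ⟨q1, hq1len, hq1sup, hq1av⟩ :=
          avoid_walk (A := fun v => v ∈ T.keys) hcutT p.length p hwT le_rfl hxT
        obtain ⟨q2, hq2len, hq2sup, hq2av⟩ :=
          avoid_walk (A := fun v => v ∈ S.keys) hcutS q1.length q1 hwS le_rfl hxS
        have hq2avT : ∀ v ∈ q2.support, v ∉ T.keys := fun v hv => hq1av v (hq2sup hv)
        obtain ⟨q3, hq3⟩ := walk_transfer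
          (P := fun v => v ∉ T.keys ∧ v ∉ S.keys)
          (Gr' := G'.graph)
          (fun a b hadj hpa hpb => by
            rw [adj_iff] at hadj ⊢
            refine ⟨hadj.1, ?_⟩
            rcases hadj.2 with he | he
            · exact Or.inl (htrans1 _ he hpa.1 hpa.2 hpb.1 hpb.2)
            · exact Or.inr (htrans1 _ he hpb.1 hpb.2 hpa.1 hpa.2))
          q2 (fun v hv => ⟨hq2avT v hv, hq2av v hv⟩)
        have := SimpleGraph.dist_le q3
        omega
    show ((G.graph.dist u w : ℤ)) - (G'.graph.dist u w : ℤ) = (T.height : ℤ) - S'.height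
    rw [e1, e2, e3, hdux, hdux']
    push_cast
    ring
  -- the sum identity
  have hsum : (∑ w ∈ R, (G.dist u w : ℤ)) - ∑ w ∈ R, (G'.dist u w : ℤ)
      = ((T.height : ℤ) - (S'.height : ℤ)) * R.card := by
    rw [← Finset.sum_sub_distrib, Finset.sum_congr rfl key, Finset.sum_const,
      nsmul_eq_mul, mul_comm]
  -- cardinality bound
  have hcardG : G.keys.toFinset.card = n := by
    rw [List.toFinset_card_of_nodup hnd]
    exact hn
  have hRcard : (n : ℤ) - (T.size + S.size : ℤ) ≤ (R.card : ℤ) := by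
    have h1 : G.keys.toFinset.card ≤ R.card + (T.keys.toFinset ∪ S.keys.toFinset).card := by
      rw [hR]
      exact Finset.card_le_card_sdiff_add_card
    have h2 : (T.keys.toFinset ∪ S.keys.toFinset).card ≤ T.size + S.size := by
      refine (Finset.card_union_le _ _).trans ?_
      exact Nat.add_le_add (List.toFinset_card_le _) (List.toFinset_card_le _)
    rw [hcardG] at h1
    push_cast
    omega
  have hTs : 1 ≤ T.size := by
    cases T with | node y ts => simp [size, keys_node]
  have hSs : 1 ≤ S.size := by
    cases S with | node y ts => simp [size, keys_node]
  -- final arithmetic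
  refine ⟨hsum, ?_, ?_⟩
  · rw [hsum]
    have hd : (1 : ℤ) ≤ (T.height : ℤ) - S'.height := by
      have := hheights
      push_cast
      omega
    have hsz : (9 : ℤ) * k * ((T.size : ℤ) + S.size) ≤ n := by exact_mod_cast hsize
    have hA : (9 * (k : ℤ) - 1) * ((T.size : ℤ) + S.size) ≤ (R.card : ℤ) := by
      nlinarith [hRcard, hsz]
    calc ((T.height : ℤ) - S'.height) * (9 * k - 1) * (T.size + S.size)
        = ((T.height : ℤ) - S'.height) * ((9 * k - 1) * (T.size + S.size)) := by ring
      _ ≤ ((T.height : ℤ) - S'.height) * R.card := by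
          exact mul_le_mul_of_nonneg_left hA (by linarith)
  · rw [hsum]
    have hd : (1 : ℤ) ≤ (T.height : ℤ) - S'.height := by
      have := hheights
      push_cast
      omega
    have hk : (1 : ℤ) ≤ (k : ℤ) := by exact_mod_cast hk1
    have hTs' : (1 : ℤ) ≤ (T.size : ℤ) := by exact_mod_cast hTs
    have hSs' : (1 : ℤ) ≤ (S.size : ℤ) := by exact_mod_cast hSs
    have hsz : (9 : ℤ) * k * ((T.size : ℤ) + S.size) ≤ n := by exact_mod_cast hsize
    have hA : (9 * (k : ℤ) - 1) * ((T.size : ℤ) + S.size) ≤ (R.card : ℤ) := by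
      nlinarith [hRcard, hsz]
    have e1 : (0 : ℤ) ≤ ((k : ℤ) - 1) * T.size := mul_nonneg (by linarith) (by linarith)
    have e2 : (8 : ℤ) ≤ (9 * (k : ℤ) - 1) * S.size := by nlinarith
    have hB : 8 * (k : ℤ) * T.size + 1 ≤ (9 * (k : ℤ) - 1) * ((T.size : ℤ) + S.size) := by
      nlinarith [e1, e2]
    have hr0 : (0 : ℤ) ≤ (R.card : ℤ) := Int.ofNat_nonneg R.card
    have hC : (R.card : ℤ) ≤ ((T.height : ℤ) - S'.height) * R.card := by
      nlinarith [hr0, hd]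
    linarith
end

section
/- If a rooted tree T has all its levels fully filled except possibly the last one, and there are no two sibling subtrees of the same height both having their last level not empty and not full, then one can permute the order of the children of each node of T so that all the leaves on the last level are placed consecutively as far to the left as possible. -/
namespace KTree

set_option linter.dupNamespace false

theorem height_node (x : ℕ) (cs : List KTree) :
    (node x cs).height = (cs.map (fun c => c.height + 1)).foldr max 0 := by
  rw [height]
  congr 1
  exact List.attach_map_val (f := fun c : KTree => c.height + 1)

theorem countAt_zero (t : KTree) : t.countAt 0 = 1 := by cases t; rfl

theorem countAt_succ (x : ℕ) (cs : List KTree) (d : ℕ) :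
    (node x cs).countAt (d + 1) = (cs.map (fun c => c.countAt d)).sum := by
  rw [countAt, List.sum_eq_foldr]
  congr 1
  exact List.attach_map_val (f := fun c : KTree => c.countAt d)

theorem countsAt_zero (x : ℕ) (cs : List KTree) : (node x cs).countsAt 0 = [cs.length] := rfl

theorem countsAt_succ (x : ℕ) (cs : List KTree) (d : ℕ) :
    (node x cs).countsAt (d + 1) = (cs.map (fun c => c.countsAt d)).flatten := by
  rw [countsAt]
  congr 1
  exact List.attach_map_val (f := fun c : KTree => c.countsAt d)

theorem length_countsAt : ∀ (t : KTree) (d : ℕ), (t.countsAt d).length = t.countAt d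
  | node x cs, 0 => by simp [countsAt_zero, countAt_zero]
  | node x cs, d + 1 => by
    rw [countsAt_succ, countAt_succ, List.length_flatten, List.map_map]
    congr 1
    refine List.map_congr_left (fun c hc => ?_)
    exact length_countsAt c d
termination_by t _ => sizeOf t
decreasing_by
  have := List.sizeOf_lt_of_mem hc
  simp only [KTree.node.sizeOf_spec]
  omega

theorem sum_countsAt : ∀ (t : KTree) (d : ℕ), (t.countsAt d).sum = t.countAt (d + 1)
  | node x cs, 0 => by
    rw [countsAt_zero, countAt_succ]
    simp [countAt_zero]
  | node x cs, d + 1 => by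
    rw [countsAt_succ, countAt_succ, List.sum_flatten, List.map_map]
    congr 1
    refine List.map_congr_left (fun c hc => ?_)
    exact sum_countsAt c d
termination_by t _ => sizeOf t
decreasing_by
  have := List.sizeOf_lt_of_mem hc
  simp only [KTree.node.sizeOf_spec]
  omega

theorem countsAt_le {k : ℕ} : ∀ (t : KTree), t.DegLE k → ∀ (d : ℕ) (m : ℕ),
    m ∈ t.countsAt d → m ≤ k
  | node x cs, hdeg, 0, m, hm => by
    rw [DegLE] at hdeg
    rw [countsAt_zero] at hm
    simp at hm
    exact hm ▸ hdeg.1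
  | node x cs, hdeg, d + 1, m, hm => by
    rw [DegLE] at hdeg
    rw [countsAt_succ] at hm
    rw [List.mem_flatten] at hm
    obtain ⟨l, hl, hml⟩ := hm
    rw [List.mem_map] at hl
    obtain ⟨c, hc, rfl⟩ := hl
    exact countsAt_le c (hdeg.2 c hc) d m hml
termination_by t => sizeOf t
decreasing_by
  have := List.sizeOf_lt_of_mem hc
  simp only [KTree.node.sizeOf_spec]
  omega

theorem le_foldr_max {l : List ℕ} {a : ℕ} (ha : a ∈ l) : a ≤ l.foldr max 0 := by
  induction l with
  | nil => simp at ha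
  | cons b l ih =>
    rcases List.mem_cons.mp ha with rfl | h
    · exact le_max_left _ _
    · exact le_trans (ih h) (le_max_right _ _)

theorem foldr_max_mem (l : List ℕ) : l.foldr max 0 ∈ l ∨ l.foldr max 0 = 0 := by
  induction l with
  | nil => right; rfl
  | cons b l ih =>
    rcases ih with h | h
    · rcases max_choice b (l.foldr max 0) with h' | h'
      · left; rw [List.foldr_cons, h']; exact List.mem_cons_self
      · left; rw [List.foldr_cons, h']; exact List.mem_cons_of_mem _ h
    · left; rw [List.foldr_cons, h]; simp

theorem height_child_lt {x : ℕ} {cs : List KTree} {c : KTree} (hc : c ∈ cs) :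
    c.height + 1 ≤ (node x cs).height := by
  rw [height_node]
  exact le_foldr_max (List.mem_map_of_mem hc)

theorem countAt_eq_zero_of_lt : ∀ (t : KTree) (d : ℕ), t.height < d → t.countAt d = 0
  | node x cs, 0, h => by omega
  | node x cs, d + 1, h => by
    rw [countAt_succ]
    rw [List.sum_eq_zero_iff]
    intro m hm
    rw [List.mem_map] at hm
    obtain ⟨c, hc, rfl⟩ := hm
    refine countAt_eq_zero_of_lt c d ?_
    have := height_child_lt (x := x) hc
    omega
termination_by t _ => sizeOf t
decreasing_by
  have := List.sizeOf_lt_of_mem hc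
  simp only [KTree.node.sizeOf_spec]
  omega

theorem countAt_height_pos : ∀ (t : KTree), 0 < t.countAt t.height
  | node x cs => by
    rcases foldr_max_mem ((cs.map (fun c => c.height + 1))) with hmem | hzero
    · rw [height_node]
      rw [List.mem_map] at hmem
      obtain ⟨c, hc, hceq⟩ := hmem
      rw [← hceq, countAt_succ]
      have hpos := countAt_height_pos c
      calc 0 < c.countAt c.height := hpos
        _ ≤ _ := List.single_le_sum (by simp) _ (List.mem_map_of_mem (f := fun c' => c'.countAt c.height) hc)
    · rw [height_node, hzero, countAt_zero]
      omega
termination_by t => sizeOf t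
decreasing_by
  have := List.sizeOf_lt_of_mem hc
  simp only [KTree.node.sizeOf_spec]
  omega

theorem countAt_succ_le {k : ℕ} (t : KTree) (hdeg : t.DegLE k) (d : ℕ) :
    t.countAt (d + 1) ≤ k * t.countAt d := by
  rw [← sum_countsAt, ← length_countsAt]
  calc (t.countsAt d).sum ≤ (t.countsAt d).length • k :=
        List.sum_le_card_nsmul _ _ (fun m hm => countsAt_le t hdeg d m hm)
    _ = k * (t.countsAt d).length := by rw [smul_eq_mul, mul_comm]

theorem countAt_le_pow {k : ℕ} (t : KTree) (hdeg : t.DegLE k) (d : ℕ) :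
    t.countAt d ≤ k ^ d := by
  induction d with
  | zero => rw [countAt_zero]; simp
  | succ d ih =>
    calc t.countAt (d+1) ≤ k * t.countAt d := countAt_succ_le t hdeg d
      _ ≤ k * k ^ d := Nat.mul_le_mul_left _ ih
      _ = k ^ (d+1) := (pow_succ' k d).symm

theorem all_eq_of_sum_eq {k : ℕ} : ∀ (l : List ℕ), (∀ m ∈ l, m ≤ k) → l.sum = k * l.length →
    ∀ m ∈ l, m = k := by
  intro l
  induction l with
  | nil => simp
  | cons a l ih =>
    intro hle hsum m hm
    have ha : a ≤ k := hle a (List.mem_cons_self)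
    have htail : l.sum ≤ l.length • k := List.sum_le_card_nsmul _ _ (fun m hm => hle m (List.mem_cons_of_mem _ hm))
    rw [smul_eq_mul, mul_comm] at htail
    rw [List.sum_cons, List.length_cons] at hsum
    have hb : k * (l.length + 1) = k * l.length + k := by ring
    rw [hb] at hsum
    have hak : a = k := by linarith
    rcases List.mem_cons.mp hm with rfl | h
    · exact hak
    · exact ih (fun m hm => hle m (List.mem_cons_of_mem _ hm)) (by linarith) m h

theorem exists_equiv_of_perm {α : Type*} {l1 l2 : List α} (h : l1.Perm l2) :
    ∃ e : Fin l1.length ≃ Fin l2.length, ∀ i : Fin l1.length, l1[i] = l2[e i] := by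
  induction h with
  | nil => exact ⟨Equiv.refl _, fun i => i.elim0⟩
  | cons a h ih =>
    obtain ⟨e, he⟩ := ih
    refine ⟨(finSuccEquiv _).trans ((Equiv.optionCongr e).trans (finSuccEquiv _).symm), ?_⟩
    intro i
    refine Fin.cases ?_ ?_ i
    · simp
    · intro j
      simpa using he j
  | swap a b l =>
    refine ⟨Equiv.swap ⟨0, by simp⟩ ⟨1, by simp⟩, fun i => ?_⟩
    rcases i with ⟨iv, hi⟩
    match iv, hi with
    | 0, hi => simp [Fin.getElem_fin, Equiv.swap_apply_def, Fin.ext_iff]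
    | 1, hi => simp [Fin.getElem_fin, Equiv.swap_apply_def, Fin.ext_iff]
    | (m+2), hi => simp [Fin.getElem_fin, Equiv.swap_apply_def, Fin.ext_iff]
  | trans h1 h2 ih1 ih2 =>
    obtain ⟨e1, he1⟩ := ih1
    obtain ⟨e2, he2⟩ := ih2
    exact ⟨e1.trans e2, fun i => (he1 i).trans (he2 (e1 i))⟩

theorem perm_map_of_equiv {α β : Type*} {l1 : List α} {l2 : List β} {f : α → γ} {g : β → γ}
    (e : Fin l1.length ≃ Fin l2.length) (h : ∀ i : Fin l1.length, f l1[i] = g l2[e i]) :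
    (l1.map f).Perm (l2.map g) := by
  have hn : l2.length = l1.length := by
    have := Fintype.card_fin l1.length ▸ Fintype.card_fin l2.length ▸ Fintype.card_congr e
    omega
  have h1 : l1.map f = List.ofFn (fun i : Fin l1.length => f l1[i]) := by
    rw [← List.ofFn_getElem (xs := l1), List.map_ofFn, List.ofFn_getElem]
    rfl
  have h2 : l2.map g = List.ofFn (fun i : Fin l2.length => g l2[i]) := by
    refine List.ext_getElem (by simp) (fun i _ _ => ?_)
    simp
  rw [h1, h2, List.ofFn_congr hn]
  have hfun : (fun i : Fin l1.length => f l1[i]) =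
      (fun i : Fin l1.length => g l2[(Fin.cast hn.symm i)]) ∘
        ((e.trans (finCongr hn)) : Equiv.Perm (Fin l1.length)) := by
    funext i
    simp only [Function.comp_apply, Equiv.trans_apply, finCongr_apply]
    rw [h i]
    congr 1
  rw [hfun]
  exact Equiv.Perm.ofFn_comp_perm _ _

theorem reorder_node {x y : ℕ} {cs ds : List KTree} :
    Reorder (node x cs) (node y ds) ↔
      (x = y ∧ ∃ e : Fin cs.length ≃ Fin ds.length, ∀ i : Fin cs.length, Reorder cs[i] ds[e i]) := by
  rw [Reorder]

theorem reorder_refl : ∀ (t : KTree), Reorder t t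
  | node x cs => by
    rw [reorder_node]
    exact ⟨rfl, Equiv.refl _, fun i => reorder_refl cs[i]⟩
termination_by t => sizeOf t
decreasing_by
  have : cs[i] ∈ cs := List.getElem_mem _
  have := List.sizeOf_lt_of_mem this
  simp only [KTree.node.sizeOf_spec]
  omega

theorem reorder_height : ∀ {a b : KTree}, Reorder a b → a.height = b.height
  | node x cs, node y ds, h => by
    rw [reorder_node] at h
    obtain ⟨rfl, e, he⟩ := h
    rw [height_node, height_node]
    have hperm : (cs.map (fun c => c.height + 1)).Perm (ds.map (fun c => c.height + 1)) :=
      perm_map_of_equiv e (fun i => by rw [reorder_height (he i)])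
    exact hperm.foldr_eq' (fun a _ b _ z => by simp [max_left_comm]) 0
termination_by a => sizeOf a
decreasing_by
  have : cs[i] ∈ cs := List.getElem_mem _
  have := List.sizeOf_lt_of_mem this
  simp only [KTree.node.sizeOf_spec]
  omega

theorem reorder_countAt : ∀ {a b : KTree}, Reorder a b → ∀ (d : ℕ), a.countAt d = b.countAt d
  | node x cs, node y ds, h, 0 => by rw [countAt_zero, countAt_zero]
  | node x cs, node y ds, h, d + 1 => by
    rw [reorder_node] at h
    obtain ⟨rfl, e, he⟩ := h
    rw [countAt_succ, countAt_succ]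
    have hperm : (cs.map (fun c => c.countAt d)).Perm (ds.map (fun c => c.countAt d)) :=
      perm_map_of_equiv e (fun i => reorder_countAt (he i) d)
    exact hperm.sum_eq
termination_by a => sizeOf a
decreasing_by
  have : cs[i] ∈ cs := List.getElem_mem _
  have := List.sizeOf_lt_of_mem this
  simp only [KTree.node.sizeOf_spec]
  omega

theorem reorder_node_of_perm {x : ℕ} {cs ms es : List KTree} (hp : cs.Perm ms)
    (hlen : ms.length = es.length)
    (hre : ∀ (i : ℕ) (hi : i < ms.length), Reorder (ms[i]'hi) (es[i]'(by omega))) :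
    Reorder (node x cs) (node x es) := by
  rw [reorder_node]
  obtain ⟨e1, he1⟩ := exists_equiv_of_perm hp
  refine ⟨rfl, e1.trans (finCongr hlen), fun i => ?_⟩
  have := hre (e1 i).val (e1 i).isLt
  simp only [Equiv.trans_apply, finCongr_apply]
  rw [he1 i]
  exact this

def PackedList (k : ℕ) (L : List ℕ) : Prop :=
  ∀ i j : ℕ, i < j → 0 < L.getD j 0 → L.getD i 0 = k

theorem getD_append_left {A L : List ℕ} {n : ℕ} (h : n < A.length) :
    (A ++ L).getD n 0 = A.getD n 0 := by
  simp only [List.getD_eq_getElem?_getD]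
  rw [List.getElem?_append_left h]

theorem getD_append_right {A L : List ℕ} {n : ℕ} (h : A.length ≤ n) :
    (A ++ L).getD n 0 = L.getD (n - A.length) 0 := by
  simp only [List.getD_eq_getElem?_getD]
  rw [List.getElem?_append_right h]

theorem getD_zero_or_mem (l : List ℕ) (n : ℕ) : l.getD n 0 = 0 ∨ l.getD n 0 ∈ l := by
  by_cases h : n < l.length
  · right
    simp only [List.getD_eq_getElem?_getD, List.getElem?_eq_getElem h, Option.getD_some]
    exact List.getElem_mem _
  · left
    have hn : l[n]? = none := List.getElem?_eq_none (by omega)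
    simp only [List.getD_eq_getElem?_getD, hn, Option.getD_none]

theorem packedList_allk_append {k : ℕ} {A L : List ℕ} (hA : ∀ m ∈ A, m = k)
    (hL : PackedList k L) : PackedList k (A ++ L) := by
  intro i j hij hj
  by_cases hi : i < A.length
  · rw [getD_append_left hi]
    rcases getD_zero_or_mem A i with h0 | hmem
    · -- entry is 0; but we must show = k. Only valid if positivity forces... need k could be 0?
      have : A.getD i 0 ∈ A := by
        simp only [List.getD_eq_getElem?_getD, List.getElem?_eq_getElem hi, Option.getD_some]
        exact List.getElem_mem _
      exact hA _ this
    · exact hA _ hmem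
  · rw [getD_append_right (by omega)]
    rw [getD_append_right (by omega)] at hj
    exact hL _ _ (by omega) hj

theorem packedList_append_zeros {k : ℕ} {L Z : List ℕ} (hL : PackedList k L)
    (hZ : ∀ m ∈ Z, m = 0) : PackedList k (L ++ Z) := by
  intro i j hij hj
  have hjL : j < L.length := by
    by_contra hc
    rw [getD_append_right (by omega)] at hj
    rcases getD_zero_or_mem Z (j - L.length) with h0 | hmem
    · omega
    · have := hZ _ hmem
      omega
  rw [getD_append_left hjL] at hj
  rw [getD_append_left (show i < L.length by omega)]
  exact hL _ _ hij hj

theorem packedList_allzero {k : ℕ} {Z : List ℕ} (hZ : ∀ m ∈ Z, m = 0) : PackedList k Z := by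
  intro i j hij hj
  rcases getD_zero_or_mem Z j with h0 | hmem
  · omega
  · have := hZ _ hmem
    omega

theorem subtreeAt_cons {x : ℕ} {cs : List KTree} {i : ℕ} {c : KTree}
    (h : cs[i]? = some c) (pos : List ℕ) :
    subtreeAt (node x cs) (i :: pos) = subtreeAt c pos := by
  rw [subtreeAt, h]

theorem reorder_node_of_forall₂ {x : ℕ} {cs ms es : List KTree} (hp : cs.Perm ms)
    (hf : List.Forall₂ Reorder ms es) : Reorder (node x cs) (node x es) := by
  have hlen : ms.length = es.length := List.Forall₂.length_eq hf
  refine reorder_node_of_perm hp hlen (fun i hi => ?_)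
  have := (List.forall₂_iff_get.mp hf).2 i hi (by omega)
  simpa using this

theorem sum_eq_zero_mem {l : List ℕ} (h : l.sum = 0) : ∀ m ∈ l, m = 0 :=
  List.sum_eq_zero_iff.mp h

theorem main_aux (k : ℕ) : ∀ (t : KTree), t.DegLE k →
    (∀ d, d < t.height → t.countAt d = k ^ d) →
    (∀ (pos : List ℕ) (x : ℕ) (cs : List KTree),
      subtreeAt t pos = some (node x cs) →
      ∀ (i j : ℕ) (A B : KTree), i ≠ j → cs[i]? = some A → cs[j]? = some B →
        A.height = B.height → ¬(LastLevelPartial k A ∧ LastLevelPartial k B)) →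
    ∃ t' : KTree, Reorder t t' ∧ Packed k t'
  | node x cs, hdeg, hfull, hnosib => by
    rw [DegLE] at hdeg
    by_cases hh : (node x cs).height ≤ 1
    · refine ⟨node x cs, reorder_refl _, ?_⟩
      intro i j hij hpos
      exfalso
      have h0 : (node x cs).height - 1 = 0 := by omega
      rw [h0, countsAt_zero] at hpos
      have hnone : ([cs.length] : List ℕ)[j]? = none := List.getElem?_eq_none (by simp; omega)
      rw [List.getD_eq_getElem?_getD, hnone] at hpos
      simp at hpos
    · push_neg at hh
      set h := (node x cs).height with hdef
      -- basic facts
      have hlen : cs.length = k := by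
        have h1 := hfull 1 (by omega)
        rw [← sum_countsAt, countsAt_zero] at h1
        simpa using h1
      have hk : 1 ≤ k := by
        by_contra hk0
        have : cs = [] := by
          have : cs.length = 0 := by omega
          exact List.length_eq_zero_iff.mp this
        rw [hdef, height_node, this] at hh
        simp at hh
      have hchildfull : ∀ c ∈ cs, ∀ e, e < h - 1 → c.countAt e = k ^ e := by
        intro c hc e he
        have h2 := hfull (e + 1) (by omega)
        rw [countAt_succ] at h2
        have hble : ∀ m ∈ cs.map (fun c => c.countAt e), m ≤ k ^ e := by
          intro m hm
          obtain ⟨c', hc', rfl⟩ := List.mem_map.mp hm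
          exact countAt_le_pow c' (hdeg.2 c' hc') e
        have hsum : (cs.map (fun c => c.countAt e)).sum
            = k ^ e * (cs.map (fun c => c.countAt e)).length := by
          rw [h2, List.length_map, hlen, ← pow_succ]
        have := all_eq_of_sum_eq _ hble hsum
        exact this _ (List.mem_map_of_mem hc)
      have hhle : ∀ c ∈ cs, c.height ≤ h - 1 := by
        intro c hc
        have := height_child_lt (x := x) hc
        omega
      have hhge : ∀ c ∈ cs, h - 2 ≤ c.height := by
        intro c hc
        have hcnt : c.countAt (h - 2) = k ^ (h - 2) := hchildfull c hc (h - 2) (by omega)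
        by_contra hlt
        have hz := countAt_eq_zero_of_lt c (h - 2) (by omega)
        have hp : 0 < k ^ (h - 2) := Nat.pow_pos hk
        omega
      -- classification
      classical
      set pfull : KTree → Bool := fun c => (c.height == h - 1) && (c.countAt (h - 1) == k ^ (h - 1)) with hpfull
      set pht : KTree → Bool := fun c => c.height == h - 1 with hpht
      set F := cs.filter pfull with hF
      set R := cs.filter (fun c => !pfull c) with hR
      set P := R.filter pht with hP
      set S := R.filter (fun c => !pht c) with hS
      have hperm : cs.Perm (F ++ (P ++ S)) :=
        ((List.Perm.append_left F (List.filter_append_perm pht R)).trans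
          (List.filter_append_perm pfull cs)).symm
      have hFmem : ∀ c ∈ F, c ∈ cs ∧ c.height = h - 1 ∧ c.countAt (h - 1) = k ^ (h - 1) := by
        intro c hc
        obtain ⟨h1, hb⟩ := List.mem_filter.mp hc
        rw [hpfull] at hb
        simp only [Bool.and_eq_true, beq_iff_eq] at hb
        exact ⟨h1, hb.1, hb.2⟩
      have hPmem : ∀ c ∈ P, c ∈ cs ∧ c.height = h - 1 ∧ c.countAt (h - 1) ≠ k ^ (h - 1) := by
        intro c hc
        have h1 := List.mem_filter.mp hc
        have h2 := List.mem_filter.mp h1.1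
        have hb1 := h1.2
        have hb2 := h2.2
        rw [hpht] at hb1
        rw [hpfull] at hb2
        simp at hb1 hb2
        exact ⟨h2.1, hb1, fun hc' => by simp [hb1, hc'] at hb2⟩
      have hSmem : ∀ c ∈ S, c ∈ cs ∧ c.height = h - 2 := by
        intro c hc
        have h1 := List.mem_filter.mp hc
        have h2 := List.mem_filter.mp h1.1
        have hb1 := h1.2
        rw [hpht] at hb1
        simp at hb1
        have := hhle c h2.1
        have := hhge c h2.1
        refine ⟨h2.1, by omega⟩
      have hPpartial : ∀ c ∈ P, LastLevelPartial k c := by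
        intro c hc
        obtain ⟨hccs, hch, hcne⟩ := hPmem c hc
        rw [LastLevelPartial, hch]
        have e1 : h - 1 - 1 = h - 2 := by omega
        rw [e1]
        have hc2 : c.countAt (h - 2) = k ^ (h - 2) := hchildfull c hccs (h - 2) (by omega)
        have hle : c.countAt (h - 1) ≤ k ^ (h - 1) := countAt_le_pow c (hdeg.2 c hccs) _
        have hpos : 0 < c.countAt (h - 1) := by
          have := countAt_height_pos c
          rw [hch] at this
          exact this
        have e2 : k * c.countAt (h - 2) = k ^ (h - 1) := by
          rw [hc2, ← pow_succ']
          congr 1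
          omega
        refine ⟨by omega, hpos, by omega⟩
      -- at most one partial child
      have hPcases : P = [] ∨ ∃ c, P = [c] := by
        match hPe : P with
        | [] => exact Or.inl rfl
        | [c] => exact Or.inr ⟨c, rfl⟩
        | c1 :: c2 :: P'' =>
          exfalso
          have hsub : List.Sublist (c1 :: c2 :: P'') cs := by
            rw [← hPe]
            exact List.filter_sublist.trans List.filter_sublist
          obtain ⟨is, hmapeq, hpw⟩ := List.sublist_eq_map_getElem hsub
          match is, hmapeq, hpw with
          | i0 :: i1 :: is', hmapeq, hpw =>
            simp only [List.map_cons, List.cons.injEq] at hmapeq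
            have hi01 : (i0 : ℕ) < (i1 : ℕ) := by
              have := List.pairwise_cons.mp hpw
              exact this.1 i1 (List.mem_cons_self)
            have hc1P : c1 ∈ c1 :: c2 :: P'' := List.mem_cons_self
            have hc2P : c2 ∈ c1 :: c2 :: P'' := List.mem_cons_of_mem _ (List.mem_cons_self)
            refine hnosib [] x cs rfl i0 i1 c1 c2 (by omega) ?_ ?_ ?_
              ⟨hPpartial c1 hc1P, hPpartial c2 hc2P⟩
            · rw [List.getElem?_eq_getElem i0.isLt, hmapeq.1]; rfl
            · rw [List.getElem?_eq_getElem i1.isLt, hmapeq.2.1]; rfl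
            · rw [(hPmem c1 hc1P).2.1, (hPmem c2 hc2P).2.1]
      -- helper facts for Packed
      have hallk : ∀ c, c ∈ cs → c.height = h - 1 → c.countAt (h - 1) = k ^ (h - 1) →
          ∀ m ∈ c.countsAt (h - 2), m = k := by
        intro c hccs hch hcfull
        have hsum : (c.countsAt (h - 2)).sum = k * (c.countsAt (h - 2)).length := by
          rw [length_countsAt, sum_countsAt]
          have e1 : h - 2 + 1 = h - 1 := by omega
          rw [e1, hcfull, hchildfull c hccs (h - 2) (by omega), ← pow_succ']
          congr 1
          omega
        exact all_eq_of_sum_eq _ (fun m hm => countsAt_le c (hdeg.2 c hccs) _ m hm) hsum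
      have hallz : ∀ c, c ∈ cs → c.height = h - 2 → ∀ m ∈ c.countsAt (h - 2), m = 0 := by
        intro c hccs hch
        refine sum_eq_zero_mem ?_
        rw [sum_countsAt]
        exact countAt_eq_zero_of_lt c _ (by omega)
      -- flattened all-k and all-zero parts
      have hAk : ∀ m ∈ (F.map (fun c => c.countsAt (h - 2))).flatten, m = k := by
        intro m hm
        rw [List.mem_flatten] at hm
        obtain ⟨l, hl, hml⟩ := hm
        obtain ⟨c, hc, rfl⟩ := List.mem_map.mp hl
        obtain ⟨hccs, hch, hcf⟩ := hFmem c hc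
        exact hallk c hccs hch hcf m hml
      have hZ0 : ∀ m ∈ (S.map (fun c => c.countsAt (h - 2))).flatten, m = 0 := by
        intro m hm
        rw [List.mem_flatten] at hm
        obtain ⟨l, hl, hml⟩ := hm
        obtain ⟨c, hc, rfl⟩ := List.mem_map.mp hl
        obtain ⟨hccs, hch⟩ := hSmem c hc
        exact hallz c hccs hch m hml
      -- packing helper
      have hpacked_of : ∀ (ds : List KTree), Reorder (node x cs) (node x ds) →
          PackedList k ((ds.map (fun c => c.countsAt (h - 2))).flatten) →
          Packed k (node x ds) := by
        intro ds hre hpl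
        unfold Packed
        intro i j hij hpos
        have hth : (node x ds).height = h := (reorder_height hre).symm
        rw [hth] at hpos ⊢
        have e1 : h - 1 = (h - 2) + 1 := by omega
        rw [e1, countsAt_succ] at hpos ⊢
        exact hpl i j hij hpos
      rcases hPcases with hPe | ⟨c, hPe⟩
      · rw [hPe] at hperm
        have hre : Reorder (node x cs) (node x (F ++ ([] ++ S))) :=
          reorder_node_of_forall₂ hperm (List.forall₂_same.mpr fun a _ => reorder_refl a)
        refine ⟨_, hre, hpacked_of _ hre ?_⟩
        simp only [List.map_append, List.flatten_append, List.map_nil, List.flatten_nil,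
          List.nil_append]
        exact packedList_allk_append hAk (packedList_allzero hZ0)
      · rw [hPe] at hperm
        have hcP : c ∈ P := by rw [hPe]; exact List.mem_cons_self
        obtain ⟨hccs, hch, _⟩ := hPmem c hcP
        have hcdeg := hdeg.2 c hccs
        have hcfull : ∀ d, d < c.height → c.countAt d = k ^ d := by
          intro d hd
          rw [hch] at hd
          exact hchildfull c hccs d (by omega)
        obtain ⟨ic, hic, hiceq⟩ := List.mem_iff_getElem.mp hccs
        have hicq : cs[ic]? = some c := by
          rw [List.getElem?_eq_getElem hic, hiceq]
        have hcnosib : ∀ (pos : List ℕ) (y : ℕ) (es : List KTree),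
            subtreeAt c pos = some (node y es) →
            ∀ (i j : ℕ) (A B : KTree), i ≠ j → es[i]? = some A → es[j]? = some B →
              A.height = B.height → ¬(LastLevelPartial k A ∧ LastLevelPartial k B) := by
          intro pos y es hst i j A B hij hA hB hhAB
          refine hnosib (ic :: pos) y es ?_ i j A B hij hA hB hhAB
          rw [subtreeAt_cons hicq pos]
          exact hst
        obtain ⟨c', hrc, hpc⟩ := main_aux k c hcdeg hcfull hcnosib
        have hre : Reorder (node x cs) (node x (F ++ ([c'] ++ S))) := by
          refine reorder_node_of_forall₂ hperm ?_
          refine List.rel_append (List.forall₂_same.mpr fun a _ => reorder_refl a) ?_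
          refine List.rel_append (List.Forall₂.cons hrc List.Forall₂.nil)
            (List.forall₂_same.mpr fun a _ => reorder_refl a)
        refine ⟨_, hre, hpacked_of _ hre ?_⟩
        simp only [List.map_append, List.flatten_append, List.map_cons, List.map_nil,
          List.flatten_cons, List.flatten_nil, List.append_nil]
        refine packedList_allk_append hAk (packedList_append_zeros ?_ hZ0)
        have hch' : c'.height = h - 1 := by rw [← reorder_height hrc, hch]
        have e2 : c'.height - 1 = h - 2 := by omega
        unfold Packed at hpc
        rw [e2] at hpc
        exact hpc
termination_by t => sizeOf t
decreasing_by
  have := List.sizeOf_lt_of_mem hccs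
  simp only [KTree.node.sizeOf_spec]
  omega


end KTree


open KTree

/-- if a rooted `k`-ary tree `t` has all its levels fully filled except
possibly the last one, and there are no two sibling subtrees of the same height both
having their last level not empty and not full, then one can permute the order of the
children of each node of `t` (relation `Reorder`) so that all the leaves on the last
level are placed consecutively as far to the left as possible (predicate `Packed`). -/
theorem reorder_to_leftmost_leaves
    (k : ℕ) (t : KTree) (hdeg : DegLE k t)
    (hfull : ∀ d, d < t.height → t.countAt d = k ^ d)
    (hnosib : ∀ (pos : List ℕ) (x : ℕ) (cs : List KTree),
      subtreeAt t pos = some (node x cs) →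
      ∀ (i j : ℕ) (A B : KTree), i ≠ j → cs[i]? = some A → cs[j]? = some B →
        A.height = B.height → ¬(LastLevelPartial k A ∧ LastLevelPartial k B)) :
    ∃ t' : KTree, Reorder t t' ∧ Packed k t' := by
  exact KTree.main_aux k t hdeg hfull hnosib
end
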